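/- The space P₂ has exactly four path components, namely the four sets {φ ∈ P₂ : b₁ > 0 and c₂ > 0}, {φ ∈ P₂ : b₁ > 0 and c₂ < 0}, {φ ∈ P₂ : b₁ < 0 and c₂ > 0} and {φ ∈ P₂ : b₁ < 0 and c₂ < 0}, where b₁ and c₂ denote the leading coefficients of the second and third component polynomials. -/
import Mathlib


open Polynomial

/-- `(f, g, h)` defines a polynomial knot: the map `t ↦ (f t, g t, h t)` is injective
and its derivative never vanishes. -/
def IsPolyKnot (f g h : Polynomial ℝ) : Prop :=
  Function.Injective (fun t : ℝ => (f.eval t, g.eval t, h.eval t)) ∧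
  ∀ t : ℝ, ((derivative f).eval t, (derivative g).eval t, (derivative h).eval t)
      ≠ ((0 : ℝ), (0 : ℝ), (0 : ℝ))

/-- The space `A₂ ≅ ℝ⁶` of coefficient tuples `(a₀, b₀, b₁, c₀, c₁, c₂)`, and inside it the
set `P₂` of tuples defining a polynomial knot `(f, g, h)` with `deg f < deg g < deg h ≤ 2`. -/
def P2 : Set (Fin 6 → ℝ) :=
  {x | IsPolyKnot (C (x 0)) (C (x 2) * X + C (x 1)) (C (x 5) * X ^ 2 + C (x 4) * X + C (x 3)) ∧
    (C (x 0) : Polynomial ℝ).natDegree < (C (x 2) * X + C (x 1)).natDegree ∧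
    (C (x 2) * X + C (x 1)).natDegree < (C (x 5) * X ^ 2 + C (x 4) * X + C (x 3)).natDegree ∧
    (C (x 5) * X ^ 2 + C (x 4) * X + C (x 3)).natDegree ≤ 2}

/-- Membership in `P₂` amounts to the two leading coefficients being nonzero. -/
lemma mem_P2_iff (x : Fin 6 → ℝ) : x ∈ P2 ↔ x 2 ≠ 0 ∧ x 5 ≠ 0 := by
  constructor
  · rintro ⟨-, h1, h2, -⟩
    have hx2 : x 2 ≠ 0 := by
      intro h
      rw [h] at h1
      simp at h1
    refine ⟨hx2, ?_⟩
    intro h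
    rw [h, natDegree_linear hx2] at h2
    simp only [map_zero, zero_mul, zero_add] at h2
    have := natDegree_linear_le (a := x 4) (b := x 3)
    omega
  · rintro ⟨h2, h5⟩
    refine ⟨⟨?_, ?_⟩, ?_, ?_, ?_⟩
    · intro a b hab
      simp only [Prod.mk.injEq, eval_add, eval_mul, eval_C, eval_X] at hab
      have : x 2 * a = x 2 * b := by linarith [hab.2.1]
      exact mul_left_cancel₀ h2 this
    · intro t h
      simp only [Prod.mk.injEq, derivative_add, derivative_mul, derivative_C, derivative_X,
        zero_mul, mul_one, zero_add, add_zero, eval_C] at h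
      exact h2 h.2.1
    · rw [natDegree_C, natDegree_linear h2]; norm_num
    · rw [natDegree_linear h2, natDegree_quadratic h5]; norm_num
    · rw [natDegree_quadratic h5]

lemma combo_pos {a b t : ℝ} (ha : 0 < a) (hb : 0 < b) (ht0 : 0 ≤ t) (ht1 : t ≤ 1) :
    0 < (1 - t) * a + t * b := by
  rcases lt_or_eq_of_le ht1 with h | h
  · nlinarith [mul_nonneg ht0 hb.le, mul_pos (sub_pos.2 h) ha]
  · subst h; simpa

lemma combo_ne {a b t : ℝ} (ha : a ≠ 0) (hb : b ≠ 0) (hs : 0 < a ↔ 0 < b)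
    (ht0 : 0 ≤ t) (ht1 : t ≤ 1) : (1 - t) * a + t * b ≠ 0 := by
  rcases ha.lt_or_gt with h | h
  · have hb' : b < 0 := by
      rcases hb.lt_or_gt with h' | h'
      · exact h'
      · exact absurd (hs.2 h') h.asymm
    have hp := combo_pos (neg_pos.2 h) (neg_pos.2 hb') ht0 ht1
    intro h0; linarith
  · exact (combo_pos h (hs.1 h) ht0 ht1).ne'

lemma joined_of_signs {x y : Fin 6 → ℝ} (hx : x ∈ P2) (hy : y ∈ P2)
    (h2 : 0 < x 2 ↔ 0 < y 2) (h5 : 0 < x 5 ↔ 0 < y 5) : JoinedIn P2 x y := by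
  obtain ⟨hx2, hx5⟩ := (mem_P2_iff x).1 hx
  obtain ⟨hy2, hy5⟩ := (mem_P2_iff y).1 hy
  refine ⟨⟨⟨fun t => (1 - t.1) • x + t.1 • y, by fun_prop⟩, by simp, by simp⟩, ?_⟩
  intro t
  rw [mem_P2_iff]
  simp only [Path.coe_mk_mk, Pi.add_apply, Pi.smul_apply, smul_eq_mul]
  exact ⟨combo_ne hx2 hy2 h2 t.2.1 t.2.2, combo_ne hx5 hy5 h5 t.2.1 t.2.2⟩

lemma sign_iff_of_joined {x y : Fin 6 → ℝ} (h : JoinedIn P2 x y) (i : Fin 6)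
    (hne : ∀ z ∈ P2, z i ≠ 0) : (0 < x i ↔ 0 < y i) := by
  obtain ⟨γ, hγ⟩ := h
  set f : unitInterval → ℝ := fun t => γ t i with hf
  have hfc : Continuous f := (continuous_apply i).comp γ.continuous
  have hf0 : f 0 = x i := by simp [hf]
  have hf1 : f 1 = y i := by simp [hf]
  have key : ∀ t : unitInterval, f t ≠ 0 := fun t => hne _ (hγ t)
  constructor
  · intro hx
    by_contra hy
    have hy' : y i < 0 := (hne y (γ.target ▸ hγ 1)).lt_of_le (not_lt.1 hy)
    have : (0:ℝ) ∈ Set.Icc (f 1) (f 0) := by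
      rw [hf0, hf1]; exact ⟨hy'.le, hx.le⟩
    obtain ⟨t, ht⟩ := intermediate_value_univ 1 0 hfc this
    exact key t ht
  · intro hy
    by_contra hx
    have hx' : x i < 0 := by
      rcases (hne x (γ.source ▸ hγ 0)).lt_or_gt with h' | h'
      · exact h'
      · exact absurd h' hx
    have : (0:ℝ) ∈ Set.Icc (f 0) (f 1) := by
      rw [hf0, hf1]; exact ⟨hx'.le, hy.le⟩
    obtain ⟨t, ht⟩ := intermediate_value_univ 0 1 hfc this
    exact key t ht

/-- The witness tuple with `b₁ = s` and `c₂ = u`. -/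
def wit (s u : ℝ) : Fin 6 → ℝ := ![0, 0, s, 0, 0, u]

lemma wit_two (s u : ℝ) : wit s u 2 = s := rfl
lemma wit_five (s u : ℝ) : wit s u 5 = u := rfl

lemma wit_mem {s u : ℝ} (hs : s ≠ 0) (hu : u ≠ 0) : wit s u ∈ P2 := by
  rw [mem_P2_iff, wit_two, wit_five]; exact ⟨hs, hu⟩

/-- `P₂` has exactly four path components, namely the four sets determined by the
signs of the leading coefficients `b₁ = x 2` and `c₂ = x 5`: each of these four sets is
nonempty, and two points of `P₂` are joined by a path in `P₂` if and only if their leading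
coefficients `b₁` and `c₂` have matching signs. -/
theorem stmt_2 :
    ({x ∈ P2 | 0 < x 2 ∧ 0 < x 5}).Nonempty ∧
    ({x ∈ P2 | 0 < x 2 ∧ x 5 < 0}).Nonempty ∧
    ({x ∈ P2 | x 2 < 0 ∧ 0 < x 5}).Nonempty ∧
    ({x ∈ P2 | x 2 < 0 ∧ x 5 < 0}).Nonempty ∧
    ∀ x ∈ P2, ∀ y ∈ P2,
      (JoinedIn P2 x y ↔ ((0 < x 2 ↔ 0 < y 2) ∧ (0 < x 5 ↔ 0 < y 5))) := by
  refine ⟨⟨wit 1 1, wit_mem one_ne_zero one_ne_zero, by norm_num [wit_two, wit_five]⟩,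
    ⟨wit 1 (-1), wit_mem one_ne_zero (by norm_num), by norm_num [wit_two, wit_five]⟩,
    ⟨wit (-1) 1, wit_mem (by norm_num) one_ne_zero, by norm_num [wit_two, wit_five]⟩,
    ⟨wit (-1) (-1), wit_mem (by norm_num) (by norm_num), by norm_num [wit_two, wit_five]⟩,
    ?_⟩
  intro x hx y hy
  constructor
  · intro h
    exact ⟨sign_iff_of_joined h 2 (fun z hz => ((mem_P2_iff z).1 hz).1),
      sign_iff_of_joined h 5 (fun z hz => ((mem_P2_iff z).1 hz).2)⟩
  · rintro ⟨h2, h5⟩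
    exact joined_of_signs hx hy h2 h5
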